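/- Let K be a field, P_0 = K[x_1,…,x_m], P = K[x_1,…,x_m,y_1,…,y_n] bigraded with deg x_i = (1,0) and deg y_j = (0,1), P_+ = (y_1,…,y_n), f ∈ P a bihomogeneous polynomial, and R = P/fP the hypersurface ring. Then for all j ≤ −n one has Hilb(H^n_{P_+}(R)_{j-1}) ≥ Hilb(H^n_{P_+}(R)_j), i.e., dim_K (H^n_{P_+}(R)_{j-1})_i ≥ dim_K (H^n_{P_+}(R)_j)_i for every i; the Hilbert function of the graded components of the top local cohomology is nonincreasing in j. -/

import Mathlib

/-!
Formalization of a statement from "On the regularity of local cohomology of bigraded algebras"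
(A. Rahimi). Here `P₀ = K[x₁,…,x_m]`, `P = P₀[y₁,…,yₙ]` is bigraded with `deg xᵢ = (1,0)`,
`deg yⱼ = (0,1)`, and `P₊ = (y₁,…,yₙ)`.  The top local cohomology `H^n_{P₊}(P)` is the free
`P₀`-module `⊕_c P₀ z^c` (`c : Fin n →₀ ℕ`, `z^c` of bidegree `(0, -n - |c|)`), on which a
bihomogeneous `f = Σ_β f_β y^β ∈ P` acts by the contraction `f ⬝ z^c = Σ_{β ≤ c} f_β z^{c-β}`.
For a hypersurface ring `R = P/fP` this yields the exact presentation
`⊕_{|c| = -n-j+b} P₀(-a) z^c → ⊕_{|c| = -n-j} P₀ z^c → H^n_{P₊}(R)_j → 0`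
(with `(a,b) = bideg f`), and `H^{n-1}_{P₊}(R)_j` is the kernel of the first map.
-/

open MvPolynomial

namespace Paper

/-- Total degree of an exponent vector. -/
def tdeg {n : ℕ} (c : Fin n →₀ ℕ) : ℕ := c.sum fun _ e => e

variable (A : Type) [CommRing A] (n : ℕ)

/-- The underlying module of the top local cohomology `H^n_{P₊}(P)` of `P = A[y₁,…,yₙ]`:
the free `A`-module with basis `z^c`, `c : Fin n →₀ ℕ` (`z^c` lies in `y`-degree `-n - |c|`). -/
abbrev Wmod := (Fin n →₀ ℕ) →₀ A

/-- The free `A`-submodule of `Wmod` spanned by the `z^c` with `|c| = k`;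
this is the graded component `H^n_{P₊}(P)_j` for `j = -n-k`. -/
noncomputable def Fk (k : ℕ) : Submodule A (Wmod A n) :=
  Finsupp.supported A A {c | tdeg c = k}

open scoped Classical in
/-- The contraction action of `f ∈ P = A[y₁,…,yₙ]` on `H^n_{P₊}(P)`:
`f ⬝ z^c = Σ_{β ≤ c} f_β z^{c-β}`, where `f = Σ_β f_β y^β` with `f_β ∈ A`. -/
noncomputable def contract (f : MvPolynomial (Fin n) A) :
    Wmod A n →ₗ[A] Wmod A n :=
  Finsupp.lsum A fun c =>
    (LinearMap.id : A →ₗ[A] A).smulRight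
      (f.support.sum fun β => if β ≤ c then Finsupp.single (c - β) (MvPolynomial.coeff β f) else 0)

variable (K : Type) [Field K] (m : ℕ)

/-- `f ∈ P = K[x₁,…,x_m][y₁,…,yₙ]` is bihomogeneous of bidegree `(a,b)`:
every monomial `x^ν y^β` occurring in `f` has `|ν| = a` and `|β| = b`. -/
def IsBihom (f : MvPolynomial (Fin n) (MvPolynomial (Fin m) K)) (a b : ℕ) : Prop :=
  ∀ β ν, MvPolynomial.coeff ν (MvPolynomial.coeff β f) ≠ 0 → tdeg ν = a ∧ tdeg β = b

/-- The `x`-degree-`i` strand of `Wmod` (coefficients homogeneous of degree `i`). -/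
def strandW (i : ℤ) : Submodule K (Wmod (MvPolynomial (Fin m) K) n) where
  carrier := {w | ∀ c ν, MvPolynomial.coeff ν (w c) ≠ 0 → (tdeg ν : ℤ) = i}
  add_mem' := by
    intro a b ha hb c ν h
    rw [Finsupp.add_apply, MvPolynomial.coeff_add] at h
    by_cases h1 : MvPolynomial.coeff ν (a c) ≠ 0
    · exact ha c ν h1
    · push_neg at h1
      exact hb c ν (by simpa [h1] using h)
  zero_mem' := by intro c ν h; simp at h
  smul_mem' := by
    intro k w hw c ν h
    rw [Finsupp.smul_apply, MvPolynomial.coeff_smul] at h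
    exact hw c ν (right_ne_zero_of_smul h)

/-- The submodule `U_j ⊆ F_j = ⊕_{|c| = t} P₀ z^c` (`j = -n-t`): the image of
`⊕_{|c| = t+b} P₀(-a) z^c` under multiplication by `f` on `H^n_{P₊}(P)`. -/
noncomputable def Uf (f : MvPolynomial (Fin n) (MvPolynomial (Fin m) K)) (t b : ℕ) :
    Submodule (MvPolynomial (Fin m) K) (Wmod (MvPolynomial (Fin m) K) n) :=
  Submodule.map (contract (MvPolynomial (Fin m) K) n f) (Fk (MvPolynomial (Fin m) K) n (t + b))

/-- The graded component `H^n_{P₊}(P/fP)_j`, `j = -n-t`, realized as the image of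
`F_j = ⊕_{|c| = t} P₀ z^c` in `Wmod/U_j`; i.e. the cokernel `F_j/U_j` of the presentation. -/
noncomputable def topH (f : MvPolynomial (Fin n) (MvPolynomial (Fin m) K)) (t b : ℕ) :
    Submodule (MvPolynomial (Fin m) K)
      ((Wmod (MvPolynomial (Fin m) K) n) ⧸ Uf n K m f t b) :=
  Submodule.map (Uf n K m f t b).mkQ (Fk (MvPolynomial (Fin m) K) n t)

/-- The `x`-degree-`i` component of `H^n_{P₊}(P/fP)_j`, `j = -n-t`, inside `Wmod/U_j`. -/
noncomputable def topHcomp (f : MvPolynomial (Fin n) (MvPolynomial (Fin m) K)) (t b : ℕ)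
    (i : ℤ) : Submodule K ((Wmod (MvPolynomial (Fin m) K) n) ⧸ Uf n K m f t b) :=
  Submodule.map ((Uf n K m f t b).mkQ.restrictScalars K)
    (strandW n K m i ⊓ (Fk (MvPolynomial (Fin m) K) n t).restrictScalars K)

/-- The grading (by `x`-degree) of `H^n_{P₊}(P/fP)_j`, `j = -n-t`. -/
noncomputable def topHgr (f : MvPolynomial (Fin n) (MvPolynomial (Fin m) K)) (t b : ℕ)
    (i : ℤ) : Submodule K ↥(topH n K m f t b) :=
  Submodule.comap ((topH n K m f t b).subtype.restrictScalars K) (topHcomp n K m f t b i)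

/-- `H^{n-1}_{P₊}(P/fP)_j`, `j = -n-t`: the kernel of multiplication by `f` from
`⊕_{|c| = t+b} P₀(-a) z^c` to `⊕_{|c| = t} P₀ z^c`. -/
noncomputable def syzM (f : MvPolynomial (Fin n) (MvPolynomial (Fin m) K)) (t b : ℕ) :
    Submodule (MvPolynomial (Fin m) K) (Wmod (MvPolynomial (Fin m) K) n) :=
  LinearMap.ker (contract (MvPolynomial (Fin m) K) n f) ⊓ Fk (MvPolynomial (Fin m) K) n (t + b)

/-- The grading of `H^{n-1}_{P₊}(P/fP)_j`, `j = -n-t`: since it lives inside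
`⊕_{|c| = t+b} P₀(-a) z^c`, its degree-`i` component consists of the elements whose
coefficients are homogeneous of degree `i - a`. -/
noncomputable def syzGr (f : MvPolynomial (Fin n) (MvPolynomial (Fin m) K)) (t b a : ℕ)
    (i : ℤ) : Submodule K ↥(syzM n K m f t b) :=
  Submodule.comap ((syzM n K m f t b).subtype.restrictScalars K) (strandW n K m (i - a))


/-! ### Auxiliary development -/

section Aux

lemma tdeg_eq_sum {n : ℕ} (c : Fin n →₀ ℕ) : tdeg c = ∑ j, c j :=
  Finsupp.sum_fintype _ _ (fun _ => rfl)

lemma tdeg_add {n : ℕ} (c d : Fin n →₀ ℕ) : tdeg (c + d) = tdeg c + tdeg d := by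
  simp [tdeg_eq_sum, Finset.sum_add_distrib]

lemma apply_le_tdeg {n : ℕ} (c : Fin n →₀ ℕ) (j : Fin n) : c j ≤ tdeg c := by
  rw [tdeg_eq_sum]
  exact Finset.single_le_sum (fun _ _ => Nat.zero_le _) (Finset.mem_univ j)

lemma tdeg_single {n : ℕ} (j : Fin n) : tdeg (Finsupp.single j 1) = 1 := by
  simp [tdeg, Finsupp.sum_single_index]

/-- The first basis exponent vector `e₁`. -/
noncomputable def e1 {n : ℕ} (hn : 0 < n) : Fin n →₀ ℕ := Finsupp.single ⟨0, hn⟩ 1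

variable {A : Type} [CommRing A] {n : ℕ}

/-- Contraction by `y₁` on `Wmod`: `ψ w = (c ↦ w (c + e₁))`, i.e. `ψ z^c = z^{c - e₁}`. -/
noncomputable def psi (A : Type) [CommRing A] (n : ℕ) (hn : 0 < n) :
    Wmod A n →ₗ[A] Wmod A n :=
  Finsupp.lcomapDomain (· + e1 hn) (add_left_injective _)

lemma psi_apply (hn : 0 < n) (w : Wmod A n) (a : Fin n →₀ ℕ) :
    psi A n hn w a = w (a + e1 hn) := rfl

lemma psi_single (hn : 0 < n) (c : Fin n →₀ ℕ) (p : A) :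
    psi A n hn (Finsupp.single c p) =
      if e1 hn ≤ c then Finsupp.single (c - e1 hn) p else 0 := by
  classical
  ext a
  rw [psi_apply]
  by_cases h : e1 hn ≤ c
  · rw [if_pos h, Finsupp.single_apply, Finsupp.single_apply]
    have hiff : c = a + e1 hn ↔ c - e1 hn = a := by
      constructor
      · rintro rfl; exact add_tsub_cancel_right _ _
      · rintro rfl; exact (tsub_add_cancel_of_le h).symm
    by_cases h2 : c = a + e1 hn
    · rw [if_pos h2, if_pos (hiff.mp h2)]
    · rw [if_neg h2, if_neg (fun hc => h2 (hiff.mpr hc))]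
  · rw [if_neg h, Finsupp.single_apply, Finsupp.coe_zero, Pi.zero_apply]
    rw [if_neg]
    rintro rfl
    exact h le_add_self

lemma contract_single (f : MvPolynomial (Fin n) A) (c : Fin n →₀ ℕ) (p : A) :
    contract A n f (Finsupp.single c p) =
      p • (f.support.sum fun β =>
        if β ≤ c then Finsupp.single (c - β) (MvPolynomial.coeff β f) else 0) := by
  classical
  simp [contract, Finsupp.lsum_single]

lemma cond_iff {β c e : Fin n →₀ ℕ} : (β ≤ c ∧ e ≤ c - β) ↔ (e ≤ c ∧ β ≤ c - e) := by
  simp only [Finsupp.le_def, Finsupp.tsub_apply]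
  rw [← forall_and, ← forall_and]
  exact forall_congr' fun j => by omega

lemma tsub_swap (c β e : Fin n →₀ ℕ) : c - β - e = c - e - β := by
  ext j
  simp only [Finsupp.tsub_apply]
  omega

lemma psi_contract (hn : 0 < n) (f : MvPolynomial (Fin n) A) (w : Wmod A n) :
    psi A n hn (contract A n f w) = contract A n f (psi A n hn w) := by
  classical
  have : (psi A n hn).comp (contract A n f) = (contract A n f).comp (psi A n hn) := by
    apply Finsupp.lhom_ext
    intro c p
    simp only [LinearMap.comp_apply, contract_single, map_smul, map_sum, psi_single]
    by_cases h : e1 hn ≤ c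
    · rw [if_pos h, contract_single]
      congr 1
      apply Finset.sum_congr rfl
      intro β _
      by_cases hb : β ≤ c - e1 hn
      · have h1 : β ≤ c := hb.trans tsub_le_self
        have h2 : e1 hn ≤ c - β := (cond_iff.mpr ⟨h, hb⟩).2
        rw [if_pos hb, if_pos h1, psi_single, if_pos h2, tsub_swap]
      · rw [if_neg hb]
        by_cases h1 : β ≤ c
        · rw [if_pos h1, psi_single, if_neg]
          intro h2
          exact hb (cond_iff.mp ⟨h1, h2⟩).2
        · rw [if_neg h1, map_zero]
    · rw [if_neg h, map_zero, smul_eq_zero_of_right]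
      apply Finset.sum_eq_zero
      intro β _
      by_cases h1 : β ≤ c
      · rw [if_pos h1, psi_single, if_neg]
        intro h2
        exact h (cond_iff.mp ⟨h1, h2⟩).1
      · rw [if_neg h1, map_zero]
  exact LinearMap.congr_fun this w

lemma psi_mem_Fk (hn : 0 < n) {k : ℕ} {w : Wmod A n} (hw : w ∈ Fk A n (k + 1)) :
    psi A n hn w ∈ Fk A n k := by
  rw [Fk, Finsupp.mem_supported'] at hw ⊢
  intro a ha
  rw [psi_apply]
  apply hw
  simp only [Set.mem_setOf_eq] at ha ⊢
  rw [tdeg_add, e1, tdeg_single]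
  omega

/-- The section `s : z^c ↦ z^{c+e₁}` of `ψ`. -/
noncomputable def sMap (A : Type) [CommRing A] (n : ℕ) (hn : 0 < n) :
    Wmod A n →ₗ[A] Wmod A n :=
  Finsupp.lmapDomain A A (· + e1 hn)

lemma psi_sMap (hn : 0 < n) (w : Wmod A n) : psi A n hn (sMap A n hn w) = w := by
  ext a
  rw [psi_apply]
  exact Finsupp.mapDomain_apply (add_left_injective _) w a

lemma sMap_mem_Fk (hn : 0 < n) {k : ℕ} {w : Wmod A n} (hw : w ∈ Fk A n k) :
    sMap A n hn w ∈ Fk A n (k + 1) := by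
  classical
  rw [Fk, Finsupp.mem_supported] at hw ⊢
  intro a ha
  have := Finsupp.mapDomain_support (f := (· + e1 hn)) (s := w) ha
  rw [Finset.mem_image] at this
  obtain ⟨c, hc, rfl⟩ := this
  have : tdeg c = k := hw hc
  simp only [Set.mem_setOf_eq, tdeg_add, e1, tdeg_single, this]

lemma sMap_apply_cases (hn : 0 < n) (w : Wmod A n) (a : Fin n →₀ ℕ) :
    sMap A n hn w a = 0 ∨ ∃ c, a = c + e1 hn ∧ sMap A n hn w a = w c := by
  classical
  by_cases h : a ∈ (sMap A n hn w).support
  · have := Finsupp.mapDomain_support (f := (· + e1 hn)) (s := w) h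
    rw [Finset.mem_image] at this
    obtain ⟨c, _, rfl⟩ := this
    exact Or.inr ⟨c, rfl, Finsupp.mapDomain_apply (add_left_injective _) w c⟩
  · exact Or.inl (Finsupp.notMem_support_iff.mp h)

end Aux

section FieldAux

variable {K : Type} [Field K] {m n : ℕ}

lemma psi_mem_strand (hn : 0 < n) {i : ℤ} {w : Wmod (MvPolynomial (Fin m) K) n}
    (hw : w ∈ strandW n K m i) : psi (MvPolynomial (Fin m) K) n hn w ∈ strandW n K m i := by
  intro c ν h
  exact hw _ ν h

lemma sMap_mem_strand (hn : 0 < n) {i : ℤ} {w : Wmod (MvPolynomial (Fin m) K) n}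
    (hw : w ∈ strandW n K m i) : sMap (MvPolynomial (Fin m) K) n hn w ∈ strandW n K m i := by
  intro a ν h
  rcases sMap_apply_cases hn w a with h0 | ⟨c, rfl, hc⟩
  · rw [h0] at h; simp at h
  · rw [hc] at h
    exact hw c ν h

lemma psi_Uf (hn : 0 < n) (f : MvPolynomial (Fin n) (MvPolynomial (Fin m) K)) (t b : ℕ)
    {x : Wmod (MvPolynomial (Fin m) K) n} (hx : x ∈ Uf n K m f (t + 1) b) :
    psi (MvPolynomial (Fin m) K) n hn x ∈ Uf n K m f t b := by
  obtain ⟨u, hu, rfl⟩ := hx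
  have hu' : u ∈ Fk (MvPolynomial (Fin m) K) n ((t + b) + 1) := by
    have : t + 1 + b = (t + b) + 1 := by omega
    rwa [this] at hu
  exact ⟨psi _ n hn u, psi_mem_Fk hn hu', (psi_contract hn f u).symm⟩

/-- The strand `strandW i ⊓ Fk k` is finite-dimensional over `K`. -/
lemma strand_inf_Fk_finiteDimensional (i : ℤ) (k : ℕ) :
    FiniteDimensional K
      ↥(strandW n K m i ⊓ (Fk (MvPolynomial (Fin m) K) n k).restrictScalars K) := by
  classical
  by_cases hi : 0 ≤ i
  · set d : ℕ := i.toNat with hd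
    have hdi : (d : ℤ) = i := Int.toNat_of_nonneg hi
    set Sc : Finset (Fin n →₀ ℕ) :=
      (Finset.Iic (Finsupp.equivFunOnFinite.symm fun _ => k)).filter (fun c => tdeg c = k)
      with hSc
    set Sv : Finset (Fin m →₀ ℕ) :=
      (Finset.Iic (Finsupp.equivFunOnFinite.symm fun _ => d)).filter (fun ν => tdeg ν = d)
      with hSv
    set B : Finset (Wmod (MvPolynomial (Fin m) K) n) :=
      (Sc ×ˢ Sv).image (fun p => Finsupp.single p.1 (MvPolynomial.monomial p.2 (1 : K)))
      with hB
    have hmemSc : ∀ c : Fin n →₀ ℕ, tdeg c = k → c ∈ Sc := by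
      intro c hc
      rw [hSc, Finset.mem_filter, Finset.mem_Iic]
      refine ⟨?_, hc⟩
      rw [Finsupp.le_def]
      intro j
      have := apply_le_tdeg c j
      simp only [Finsupp.coe_equivFunOnFinite_symm]
      omega
    have hmemSv : ∀ ν : Fin m →₀ ℕ, tdeg ν = d → ν ∈ Sv := by
      intro ν hν
      rw [hSv, Finset.mem_filter, Finset.mem_Iic]
      refine ⟨?_, hν⟩
      rw [Finsupp.le_def]
      intro j
      have := apply_le_tdeg ν j
      simp only [Finsupp.coe_equivFunOnFinite_symm]
      omega
    have hle : strandW n K m i ⊓ (Fk (MvPolynomial (Fin m) K) n k).restrictScalars K ≤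
        Submodule.span K (B : Set (Wmod (MvPolynomial (Fin m) K) n)) := by
      rintro w ⟨hw1, hw2⟩
      rw [← Finsupp.sum_single w, Finsupp.sum]
      apply Submodule.sum_mem
      intro c hc
      have htc : tdeg c = k := by
        have hw2' : w ∈ Fk (MvPolynomial (Fin m) K) n k := hw2
        rw [Fk, Finsupp.mem_supported] at hw2'
        exact hw2' hc
      have : Finsupp.single c (w c) =
          ∑ ν ∈ (w c).support,
            MvPolynomial.coeff ν (w c) •
              Finsupp.single c (MvPolynomial.monomial ν (1 : K)) := by
        conv_lhs =>
          rw [show (Finsupp.single c (w c) : Wmod (MvPolynomial (Fin m) K) n) =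
            (Finsupp.lsingle c : MvPolynomial (Fin m) K →ₗ[K] _) (w c) from rfl,
            (w c).as_sum]
        rw [map_sum]
        apply Finset.sum_congr rfl
        intro ν _
        rw [Finsupp.smul_single, MvPolynomial.smul_monomial, smul_eq_mul, mul_one]
        rfl
      rw [this]
      apply Submodule.sum_mem
      intro ν hν
      apply Submodule.smul_mem
      apply Submodule.subset_span
      rw [hB, Finset.coe_image]
      refine ⟨(c, ν), ?_, rfl⟩
      rw [Finset.mem_coe, Finset.mem_product]
      have hcoeff : MvPolynomial.coeff ν (w c) ≠ 0 := by
        rwa [MvPolynomial.mem_support_iff] at hν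
      have := hw1 c ν hcoeff
      have htν : tdeg ν = d := by omega
      exact ⟨hmemSc c htc, hmemSv ν htν⟩
    exact Submodule.finiteDimensional_of_le hle
  · have hle : strandW n K m i ⊓ (Fk (MvPolynomial (Fin m) K) n k).restrictScalars K ≤ ⊥ := by
      rintro w ⟨hw1, _⟩
      simp only [Submodule.mem_bot]
      refine Finsupp.ext fun c => MvPolynomial.eq_zero_iff.mpr fun ν => ?_
      by_contra h
      have := hw1 c ν h
      omega
    exact Submodule.finiteDimensional_of_le hle

end FieldAux

/-- **Theorem (paper, Theorem 3.5).** Let `R = P/fP` be a (bigraded) hypersurface ring,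
`f` bihomogeneous of bidegree `(a,b)`.  Then `Hilb(H^n_{P₊}(R)_{j-1}) ≥ Hilb(H^n_{P₊}(R)_j)`
for all `j ≤ -n`, i.e. (writing `j = -n-t`, `t ∈ ℕ`) for every `x`-degree `i` the dimension
`dim_K (H^n_{P₊}(R)_{-n-t})_i` is a nondecreasing function of `t`. -/
theorem hilbert_function_of_top_local_cohomology_of_hypersurface_nonincreasing
    (K : Type) [Field K] (m n : ℕ) (hn : 0 < n)
    (f : MvPolynomial (Fin n) (MvPolynomial (Fin m) K)) (a b : ℕ)
    (hf : IsBihom n K m f a b) (t : ℕ) (i : ℤ) :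
    Module.finrank K ↥(topHcomp n K m f t b i) ≤
      Module.finrank K ↥(topHcomp n K m f (t + 1) b i) := by
  classical
  set A := MvPolynomial (Fin m) K with hA
  let G : (Wmod A n ⧸ Uf n K m f (t + 1) b) →ₗ[A] (Wmod A n ⧸ Uf n K m f t b) :=
    Submodule.mapQ _ _ (psi A n hn) (fun x hx => psi_Uf hn f t b hx)
  let GK := G.restrictScalars K
  have hle : topHcomp n K m f t b i ≤ Submodule.map GK (topHcomp n K m f (t + 1) b i) := by
    rintro x ⟨w, ⟨hw1, hw2⟩, rfl⟩
    refine ⟨(Uf n K m f (t + 1) b).mkQ (sMap A n hn w),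
      ⟨sMap A n hn w, ⟨sMap_mem_strand hn hw1, sMap_mem_Fk hn hw2⟩, rfl⟩, ?_⟩
    show G ((Uf n K m f (t + 1) b).mkQ (sMap A n hn w)) = _
    rw [Submodule.mkQ_apply, Submodule.mapQ_apply, psi_sMap]
    rfl
  have hX : FiniteDimensional K
      ↥(strandW n K m i ⊓ (Fk A n (t + 1)).restrictScalars K) :=
    strand_inf_Fk_finiteDimensional i (t + 1)
  have h1 : Module.Finite K ↥(topHcomp n K m f (t + 1) b i) :=
    Module.Finite.iff_fg.mpr ((Module.Finite.iff_fg.mp hX).map _)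
  have h2 : Module.Finite K ↥(Submodule.map GK (topHcomp n K m f (t + 1) b i)) :=
    Module.Finite.iff_fg.mpr ((Module.Finite.iff_fg.mp h1).map _)
  calc Module.finrank K ↥(topHcomp n K m f t b i)
      ≤ Module.finrank K ↥(Submodule.map GK (topHcomp n K m f (t + 1) b i)) :=
        Submodule.finrank_mono hle
    _ ≤ Module.finrank K ↥(topHcomp n K m f (t + 1) b i) :=
        Submodule.finrank_map_le _ _

end Paper
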